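/- Let G be a group, 𝔤 = (g_1,…,g_n) a finite string of elements of G, ℰ = {E_1,…,E_m} a finite partition of G, and suppose a subsystem of Eq(𝔤,ℰ) consisting of n equations, encoded by n×ℓ (0,1)-matrices V and W (where ℓ = |Con(𝔤,ℰ)|), is normal and moreover satisfies ∑_{i=1}^n (W_i − V_i) = (1,1,…,1) (equivalently, α_C = 1 for every configuration C). Then the Tarski number of G satisfies τ(G) ≤ (ℓ−1)(2^n − 1). -/

import Mathlib

namespace PaperStmt

/-- A (0,1)-matrix: every entry is 0 or 1. -/
def ZeroOneMat {α β : Type*} (M : Matrix α β ℝ) : Prop := ∀ i j, M i j = 0 ∨ M i j = 1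

/-- The lower-triangular matrix `T` with all entries on and below the diagonal equal to 1. -/
def Tmat (n : ℕ) : Matrix (Fin n) (Fin n) ℝ := fun i j => if j ≤ i then 1 else 0

/-- The permutation matrix associated to a permutation `σ` (row `i` is `e_{σ i}`). -/
def permMat {n : ℕ} (σ : Equiv.Perm (Fin n)) : Matrix (Fin n) (Fin n) ℝ :=
  fun i j => if σ i = j then 1 else 0

/-- Cyclic successor on `Fin n`. -/
def cycSucc {n : ℕ} (i : Fin n) : Fin n := ⟨(i.val + 1) % n, Nat.mod_lt _ i.pos⟩

/-- `M⁺`: the matrix `M` with its rows cyclically shifted up by one. -/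
def shiftRows {n : ℕ} {ι : Type*} (M : Matrix (Fin n) ι ℝ) : Matrix (Fin n) ι ℝ :=
  fun i j => M (cycSucc i) j

/-- The system `(B - A) X = 0` is *normal* if there is a permutation matrix `P` such that
every entry of `T P (B - A) - P⁺ A` is an integer `≥ -1`. -/
def IsNormal {n : ℕ} {ι : Type*} (A B : Matrix (Fin n) ι ℝ) : Prop :=
  ∃ σ : Equiv.Perm (Fin n), ∀ (i : Fin n) (j : ι),
    ∃ z : ℤ,
      (Tmat n * (permMat σ * (B - A)) - shiftRows (permMat σ) * A) i j = (z : ℝ) ∧ -1 ≤ z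

end PaperStmt

open Pointwise

namespace PaperStmt

/-- A group admits a paradoxical decomposition: there are pairwise disjoint subsets
`A 1, …, A p, B 1, …, B q` and group elements `s i`, `t j` such that the translates
`s i • A i` partition `G` and the translates `t j • B j` partition `G`. -/
def IsParadoxical (G : Type*) [Group G] : Prop :=
  ∃ (p q : ℕ), 0 < p ∧ 0 < q ∧
    ∃ (A : Fin p → Set G) (B : Fin q → Set G) (s : Fin p → G) (t : Fin q → G),
      (∀ i i', i ≠ i' → Disjoint (A i) (A i')) ∧
      (∀ j j', j ≠ j' → Disjoint (B j) (B j')) ∧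
      (∀ i j, Disjoint (A i) (B j)) ∧
      (⋃ i, s i • A i) = Set.univ ∧
      (∀ i i', i ≠ i' → Disjoint (s i • A i) (s i' • A i')) ∧
      (⋃ j, t j • B j) = Set.univ ∧
      (∀ j j', j ≠ j' → Disjoint (t j • B j) (t j' • B j'))

/-- A finitely additive, left-invariant probability measure defined on all subsets of `G`
(the defining property of amenability for a discrete group). -/
def HasLeftInvariantMean (G : Type*) [Group G] : Prop :=
  ∃ μ : Set G → ℝ,
    (∀ A : Set G, 0 ≤ μ A ∧ μ A ≤ 1) ∧
    μ Set.univ = 1 ∧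
    (∀ A B : Set G, Disjoint A B → μ (A ∪ B) = μ A + μ B) ∧
    (∀ (g : G) (A : Set G), μ (g • A) = μ A)

/-- A *complete* paradoxical decomposition with `p + q` pieces: the pieces
`A 1, …, A p, B 1, …, B q` form a partition of `G`, and the translates
`s i • A i` and `t j • B j` each form a partition of `G`. -/
def IsCompleteParadox (G : Type*) [Group G] (p q : ℕ) : Prop :=
  ∃ (A : Fin p → Set G) (B : Fin q → Set G) (s : Fin p → G) (t : Fin q → G),
    (∀ i i', i ≠ i' → Disjoint (A i) (A i')) ∧
    (∀ j j', j ≠ j' → Disjoint (B j) (B j')) ∧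
    (∀ i j, Disjoint (A i) (B j)) ∧
    ((⋃ i, A i) ∪ (⋃ j, B j)) = Set.univ ∧
    (⋃ i, s i • A i) = Set.univ ∧
    (∀ i i', i ≠ i' → Disjoint (s i • A i) (s i' • A i')) ∧
    (⋃ j, t j • B j) = Set.univ ∧
    (∀ j j', j ≠ j' → Disjoint (t j • B j) (t j' • B j'))

/-- The Tarski number of a group: the least total number of pieces `p + q` over all
complete paradoxical decompositions of `G`, and `∞` if there is none. -/
noncomputable def tarskiNumber (G : Type*) [Group G] : ℕ∞ :=
  sInf {N : ℕ∞ | ∃ p q : ℕ, N = ((p + q : ℕ) : ℕ∞) ∧ IsCompleteParadox G p q}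

end PaperStmt

open Pointwise

namespace PaperStmt

/-- `E : Fin m → Set G` is a partition of `G`: pairwise disjoint with union all of `G`. -/
def IsPartition {G : Type*} {m : ℕ} (E : Fin m → Set G) : Prop :=
  (∀ i j, i ≠ j → Disjoint (E i) (E j)) ∧ (⋃ i, E i) = Set.univ

/-- `C = (c_0, …, c_n)` is a configuration for the pair `(g, E)`: there is `x ∈ E (c 0)`
with `g i * x ∈ E (c i)` for `1 ≤ i ≤ n`. -/
def IsConfig {G : Type*} [Group G] {n m : ℕ} (g : Fin n → G) (E : Fin m → Set G)
    (C : Fin (n + 1) → Fin m) : Prop :=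
  ∃ x : G, x ∈ E (C 0) ∧ ∀ i : Fin n, g i * x ∈ E (C i.succ)

/-- `x_0(C) = E_{c_0} ∩ ⋂_{j=1}^n g_j⁻¹ E_{c_j}`. -/
def xzero {G : Type*} [Group G] {n m : ℕ} (g : Fin n → G) (E : Fin m → Set G)
    (C : Fin (n + 1) → Fin m) : Set G :=
  E (C 0) ∩ ⋂ i : Fin n, (g i)⁻¹ • E (C i.succ)

/-- The string `(g_0, g_1, …, g_n)` with `g_0 = e`. -/
def ghat {G : Type*} [Group G] {n : ℕ} (g : Fin n → G) : Fin (n + 1) → G := Fin.cons 1 g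

/-- `x_j(C) = g_j • x_0(C)` for `0 ≤ j ≤ n` (with `g_0 = e`). -/
def xj {G : Type*} [Group G] {n m : ℕ} (g : Fin n → G) (E : Fin m → Set G)
    (C : Fin (n + 1) → Fin m) (j : Fin (n + 1)) : Set G :=
  ghat g j • xzero g E C

/-- The real-valued indicator of a proposition. -/
noncomputable def ind (P : Prop) : ℝ :=
  letI := Classical.propDecidable P; if P then 1 else 0

/-- `f` is a solution of the system of configuration equations `Eq(g, E)`:
for all `1 ≤ i ≤ m` and `0 ≤ j, k ≤ n`,
`∑_{C : x_j(C) ⊆ E_i} f C = ∑_{C : x_k(C) ⊆ E_i} f C`. -/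
def IsEqSolution {G : Type*} [Group G] {n m : ℕ} (g : Fin n → G) (E : Fin m → Set G)
    (f : {C : Fin (n + 1) → Fin m // IsConfig g E C} → ℝ) : Prop :=
  ∀ (i : Fin m) (j k : Fin (n + 1)),
    ∑ᶠ C ∈ {C : {C : Fin (n + 1) → Fin m // IsConfig g E C} | xj g E C.1 j ⊆ E i}, f C =
    ∑ᶠ C ∈ {C : {C : Fin (n + 1) → Fin m // IsConfig g E C} | xj g E C.1 k ⊆ E i}, f C

end PaperStmt

namespace PaperStmt

/- ===================== auxiliary development ===================== -/

section MatAux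

variable {n : ℕ} {ι : Type*} (σ : Equiv.Perm (Fin n))

lemma permMat_mul (M : Matrix (Fin n) ι ℝ) (k : Fin n) (c : ι) :
    (permMat σ * M) k c = M (σ k) c := by
  rw [Matrix.mul_apply]
  simp only [permMat, ite_mul, one_mul, zero_mul]
  exact Finset.sum_ite_eq Finset.univ (σ k) (fun j => M j c) |>.trans (by simp)

lemma Tmat_mul (M : Matrix (Fin n) ι ℝ) (i : Fin n) (c : ι) :
    (Tmat n * M) i c = ∑ k ∈ Finset.univ.filter (fun k => k ≤ i), M k c := by
  rw [Matrix.mul_apply, Finset.sum_filter]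
  simp [Tmat, ite_mul]

lemma shiftRows_mul (M : Matrix (Fin n) ι ℝ) (i : Fin n) (c : ι) :
    (shiftRows (permMat σ) * M) i c = M (σ (cycSucc i)) c := by
  rw [Matrix.mul_apply]
  simp only [shiftRows, permMat, ite_mul, one_mul, zero_mul]
  exact Finset.sum_ite_eq Finset.univ (σ (cycSucc i)) (fun j => M j c) |>.trans (by simp)

lemma entry_eq (V W : Matrix (Fin n) ι ℝ) (i : Fin n) (c : ι) :
    (Tmat n * (permMat σ * (W - V)) - shiftRows (permMat σ) * V) i c
      = (∑ k ∈ Finset.univ.filter (fun k => k ≤ i), (W (σ k) c - V (σ k) c))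
        - V (σ (cycSucc i)) c := by
  rw [Matrix.sub_apply, Tmat_mul, shiftRows_mul]
  congr 1
  refine Finset.sum_congr rfl fun k _ => ?_
  rw [permMat_mul]
  simp [Matrix.sub_apply]

end MatAux

section Aux

attribute [local instance] Classical.propDecidable

variable {G : Type*} [Group G] {n m : ℕ}

@[simp] lemma ghat_zero (g : Fin n → G) : ghat g 0 = 1 := rfl

@[simp] lemma ghat_succ (g : Fin n → G) (i : Fin n) : ghat g i.succ = g i := by
  simp [ghat]

lemma ind_pos {P : Prop} (h : P) : ind P = 1 := by
  unfold ind; exact if_pos h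

lemma ind_neg {P : Prop} (h : ¬ P) : ind P = 0 := by
  unfold ind; exact if_neg h

lemma ind_congr {P Q : Prop} (h : P ↔ Q) : ind P = ind Q := by
  by_cases hp : P
  · rw [ind_pos hp, ind_pos (h.mp hp)]
  · rw [ind_neg hp, ind_neg (fun hq => hp (h.mpr hq))]

variable (g : Fin n → G) (E : Fin m → Set G)

lemma part_unique (hE : IsPartition E) {x : G} {i i' : Fin m}
    (h : x ∈ E i) (h' : x ∈ E i') : i = i' := by
  by_contra hne
  exact Set.disjoint_left.mp (hE.1 i i' hne) h h'

lemma exists_mem_part (hE : IsPartition E) (x : G) : ∃ i, x ∈ E i := by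
  have : x ∈ ⋃ i, E i := hE.2 ▸ Set.mem_univ x
  exact Set.mem_iUnion.mp this

noncomputable def cfg (hE : IsPartition E) (z : G) : Fin (n + 1) → Fin m :=
  fun j => (exists_mem_part E hE (ghat g j * z)).choose

lemma cfg_mem (hE : IsPartition E) (z : G) (j : Fin (n + 1)) :
    ghat g j * z ∈ E (cfg g E hE z j) :=
  (exists_mem_part E hE (ghat g j * z)).choose_spec

lemma cfg_eq_iff (hE : IsPartition E) (z : G) (j : Fin (n + 1)) (i : Fin m) :
    cfg g E hE z j = i ↔ ghat g j * z ∈ E i := by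
  constructor
  · rintro rfl; exact cfg_mem g E hE z j
  · intro h; exact part_unique E hE (cfg_mem g E hE z j) h

lemma cfg_isConfig (hE : IsPartition E) (z : G) : IsConfig g E (cfg g E hE z) := by
  refine ⟨z, ?_, fun i => ?_⟩
  · have := cfg_mem g E hE z 0; simpa using this
  · have := cfg_mem g E hE z i.succ; simpa using this

lemma xzero_nonempty {C : Fin (n + 1) → Fin m} (h : IsConfig g E C) :
    (xzero g E C).Nonempty := by
  obtain ⟨x, hx0, hxs⟩ := h
  refine ⟨x, hx0, ?_⟩
  refine Set.mem_iInter.mpr fun i => ?_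
  rw [Set.mem_inv_smul_set_iff]
  simpa using hxs i

lemma xj_subset (C : Fin (n + 1) → Fin m) (j : Fin (n + 1)) :
    xj g E C j ⊆ E (C j) := by
  induction j using Fin.cases with
  | zero =>
      intro y hy
      rw [xj, ghat_zero, Set.mem_smul_set] at hy
      obtain ⟨x, hx, rfl⟩ := hy
      simpa using hx.1
  | succ i =>
      intro y hy
      rw [xj, ghat_succ, Set.mem_smul_set] at hy
      obtain ⟨x, hx, rfl⟩ := hy
      have := Set.mem_iInter.mp hx.2 i
      rw [Set.mem_inv_smul_set_iff] at this
      simpa using this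

lemma xj_subset_iff (hE : IsPartition E) {C : Fin (n + 1) → Fin m}
    (h : IsConfig g E C) (j : Fin (n + 1)) (i : Fin m) :
    xj g E C j ⊆ E i ↔ C j = i := by
  constructor
  · intro hsub
    obtain ⟨x, hx⟩ := xzero_nonempty g E h
    have hmem : ghat g j * x ∈ xj g E C j := ⟨x, hx, rfl⟩
    exact part_unique E hE (xj_subset g E C j hmem) (hsub hmem)
  · rintro rfl; exact xj_subset g E C j

lemma cfg_of_config (hE : IsPartition E) {C : Fin (n + 1) → Fin m}
    (h : IsConfig g E C) : ∃ z : G, cfg g E hE z = C := by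
  obtain ⟨x, hx0, hxs⟩ := h
  refine ⟨x, funext fun j => ?_⟩
  rw [cfg_eq_iff]
  induction j using Fin.cases with
  | zero => simpa using hx0
  | succ i => simpa using hxs i

variable (iT : Fin n → Fin m) (jT kT : Fin n → Fin (n + 1))

/-- `z ∈ F_t` where `F_t = (ghat g (jT t))⁻¹ • E (iT t)`. -/
def InF (t : Fin n) (z : G) : Prop := ghat g (jT t) * z ∈ E (iT t)

/-- `z ∈ F'_t` where `F'_t = (ghat g (kT t))⁻¹ • E (iT t)`. -/
def InG (t : Fin n) (z : G) : Prop := ghat g (kT t) * z ∈ E (iT t)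

/-- the translation with `uu t • F t = F' t`. -/
def uu (t : Fin n) : G := (ghat g (kT t))⁻¹ * ghat g (jT t)

lemma InG_uu (t : Fin n) (z : G) :
    InG g E iT kT t (uu g jT kT t * z) ↔ InF g E iT jT t z := by
  unfold InG InF uu
  rw [← mul_assoc, mul_inv_cancel_left]

lemma InF_uuinv (t : Fin n) (z : G) :
    InF g E iT jT t ((uu g jT kT t)⁻¹ * z) ↔ InG g E iT kT t z := by
  unfold InG InF uu
  rw [mul_inv_rev, inv_inv, ← mul_assoc, mul_inv_cancel_left]

/-- the configuration of a point, as an element of the configuration subtype. -/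
noncomputable def cfgS (hE : IsPartition E) (z : G) : {C : Fin (n + 1) → Fin m // IsConfig g E C} :=
  ⟨cfg g E hE z, cfg_isConfig g E hE z⟩

variable (V W : Matrix (Fin n) {C : Fin (n + 1) → Fin m // IsConfig g E C} ℝ)

lemma W_eq (hE : IsPartition E)
    (hW : ∀ t C, W t C = ind (xj g E C.1 (jT t) ⊆ E (iT t))) (t : Fin n) (z : G) :
    W t (cfgS g E hE z) = ind (InF g E iT jT t z) := by
  rw [hW]
  refine ind_congr ?_
  simp only [cfgS]
  rw [xj_subset_iff g E hE (cfg_isConfig g E hE z), cfg_eq_iff]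
  rfl

lemma V_eq (hE : IsPartition E)
    (hV : ∀ t C, V t C = ind (xj g E C.1 (kT t) ⊆ E (iT t))) (t : Fin n) (z : G) :
    V t (cfgS g E hE z) = ind (InG g E iT kT t z) := by
  rw [hV]
  refine ind_congr ?_
  simp only [cfgS]
  rw [xj_subset_iff g E hE (cfg_isConfig g E hE z), cfg_eq_iff]
  rfl

lemma hsumPoint (hE : IsPartition E)
    (hV : ∀ t C, V t C = ind (xj g E C.1 (kT t) ⊆ E (iT t)))
    (hW : ∀ t C, W t C = ind (xj g E C.1 (jT t) ⊆ E (iT t)))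
    (hsum : ∀ C, ∑ i, (W i C - V i C) = 1) (z : G) :
    ∑ t, (ind (InF g E iT jT t z) - ind (InG g E iT kT t z)) = 1 := by
  have := hsum (cfgS g E hE z)
  rw [← this]
  refine Finset.sum_congr rfl fun t _ => ?_
  rw [W_eq g E iT jT W hE hW t z, V_eq g E iT kT V hE hV t z]

end Aux

end PaperStmt
namespace PaperStmt

section Aux2

attribute [local instance] Classical.propDecidable

variable {G : Type*} [Group G] {n m : ℕ}
variable (g : Fin n → G) (E : Fin m → Set G)
variable (iT : Fin n → Fin m) (jT kT : Fin n → Fin (n + 1))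
variable (σ : Equiv.Perm (Fin n))

/-- running count `ν_{r-1}(z)` of tokens at `z` after `r` steps. -/
noncomputable def nuR (r : ℕ) (z : G) : ℝ :=
  1 + ∑ k ∈ Finset.univ.filter (fun k : Fin n => (k : ℕ) < r),
        (ind (InF g E iT jT (σ k) z) - ind (InG g E iT kT (σ k) z))

lemma nuR_zero (z : G) : nuR g E iT jT kT σ 0 z = 1 := by
  rw [nuR]
  norm_num

lemma filter_succ (r : ℕ) (hr : r < n) :
    Finset.univ.filter (fun k : Fin n => (k : ℕ) < r + 1)
      = insert ⟨r, hr⟩ (Finset.univ.filter (fun k : Fin n => (k : ℕ) < r)) := by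
  ext k
  simp only [Finset.mem_filter, Finset.mem_insert, Finset.mem_univ, true_and]
  constructor
  · intro hk
    rcases Nat.lt_succ_iff_lt_or_eq.mp hk with h | h
    · exact Or.inr (by simpa using h)
    · exact Or.inl (by ext; simpa using h)
  · rintro (rfl | hk)
    · simp
    · omega

lemma nuR_succ (r : ℕ) (hr : r < n) (z : G) :
    nuR g E iT jT kT σ (r + 1) z = nuR g E iT jT kT σ r z
      + (ind (InF g E iT jT (σ ⟨r, hr⟩) z) - ind (InG g E iT kT (σ ⟨r, hr⟩) z)) := by
  rw [nuR, nuR, filter_succ r hr, Finset.sum_insert (by simp)]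
  ring

lemma nuR_top
    (hE : IsPartition E)
    (V W : Matrix (Fin n) {C : Fin (n + 1) → Fin m // IsConfig g E C} ℝ)
    (hV : ∀ t C, V t C = ind (xj g E C.1 (kT t) ⊆ E (iT t)))
    (hW : ∀ t C, W t C = ind (xj g E C.1 (jT t) ⊆ E (iT t)))
    (hsum : ∀ C, ∑ i, (W i C - V i C) = 1) (z : G) :
    nuR g E iT jT kT σ n z = 2 := by
  have hfilter : Finset.univ.filter (fun k : Fin n => (k : ℕ) < n) = Finset.univ := by
    ext k; simpa using k.isLt
  rw [nuR, hfilter]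
  have h2 : (∑ k : Fin n, (ind (InF g E iT jT (σ k) z) - ind (InG g E iT kT (σ k) z))) = 1 :=
    (Equiv.sum_comp σ (fun t => ind (InF g E iT jT t z) - ind (InG g E iT kT t z))).trans
      (hsumPoint g E iT jT kT V W hE hV hW hsum z)
  rw [h2]
  norm_num

/-- pointwise consequence of normality: before each withdrawal there is a token. -/
lemma normPoint
    (hE : IsPartition E)
    (V W : Matrix (Fin n) {C : Fin (n + 1) → Fin m // IsConfig g E C} ℝ)
    (hV : ∀ t C, V t C = ind (xj g E C.1 (kT t) ⊆ E (iT t)))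
    (hW : ∀ t C, W t C = ind (xj g E C.1 (jT t) ⊆ E (iT t)))
    (hσ : ∀ (i : Fin n) (c : {C : Fin (n + 1) → Fin m // IsConfig g E C}),
      ∃ zz : ℤ,
        (Tmat n * (permMat σ * (W - V)) - shiftRows (permMat σ) * V) i c = (zz : ℝ) ∧ -1 ≤ zz)
    (r : ℕ) (hr : r < n) (z : G)
    (hz : InG g E iT kT (σ ⟨r, hr⟩) z) :
    1 ≤ nuR g E iT jT kT σ r z := by
  rcases Nat.eq_zero_or_pos r with rfl | hrpos
  · rw [nuR_zero]
  -- r ≥ 1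
  have hr1 : r - 1 < n := by omega
  set i : Fin n := ⟨r - 1, hr1⟩ with hi
  have hcyc : cycSucc i = ⟨r, hr⟩ := by
    have h1 : r - 1 + 1 = r := by omega
    ext
    simp [cycSucc, hi, h1, Nat.mod_eq_of_lt hr]
  obtain ⟨zz, hzz, hzz1⟩ := hσ i (cfgS g E hE z)
  rw [entry_eq] at hzz
  have hV1 : V (σ (cycSucc i)) (cfgS g E hE z) = 1 := by
    rw [hcyc, V_eq g E iT kT V hE hV]
    exact ind_pos hz
  have hfil : Finset.univ.filter (fun k : Fin n => k ≤ i)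
      = Finset.univ.filter (fun k : Fin n => (k : ℕ) < r) := by
    ext k
    simp only [Finset.mem_filter, Finset.mem_univ, true_and, Fin.le_def, hi]
    omega
  have hsum' : (∑ k ∈ Finset.univ.filter (fun k : Fin n => (k : ℕ) < r),
      (ind (InF g E iT jT (σ k) z) - ind (InG g E iT kT (σ k) z))) - 1 = (zz : ℝ) := by
    rw [← hzz, hV1, hfil]
    congr 1
    refine Finset.sum_congr rfl fun k _ => ?_
    rw [W_eq g E iT jT W hE hW, V_eq g E iT kT V hE hV]
  have : (-1 : ℝ) ≤ zz := by exact_mod_cast hzz1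
  rw [nuR]
  nlinarith [hsum']

end Aux2

end PaperStmt
namespace PaperStmt

section Aux3

attribute [local instance] Classical.propDecidable

variable {G : Type*} [Group G] {n m : ℕ}
variable (g : Fin n → G) (E : Fin m → Set G)
variable (iT : Fin n → Fin m) (jT kT : Fin n → Fin (n + 1))

/-- selection function: some element of a nonempty finset. -/
noncomputable def sel (T : Finset (Finset (Fin n))) : Finset (Fin n) :=
  if h : T.Nonempty then h.choose else ∅

lemma sel_mem {T : Finset (Finset (Fin n))} (h : T.Nonempty) : sel T ∈ T := by
  rw [sel, dif_pos h]; exact h.choose_spec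

variable (σ : Equiv.Perm (Fin n))

/-- one step of the token process. -/
noncomputable def TokStep (r : ℕ) (T : G → Finset (Finset (Fin n))) :
    G → Finset (Finset (Fin n)) := fun z =>
  if hr : r < n then
    (if InG g E iT kT (σ ⟨r, hr⟩) z then (T z).erase (sel (T z)) else T z)
    ∪
    (if InF g E iT jT (σ ⟨r, hr⟩) z then
        {insert ⟨r, hr⟩ (sel (T (uu g jT kT (σ ⟨r, hr⟩) * z)))}
      else ∅)
  else T z

/-- token histories at each point, after `r` steps of the process. -/
noncomputable def Tok (r : ℕ) : G → Finset (Finset (Fin n)) :=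
  Nat.rec (fun _ => ({∅} : Finset (Finset (Fin n))))
    (fun r T => TokStep g E iT jT kT σ r T) r

lemma Tok_zero (z : G) : Tok g E iT jT kT σ 0 z = {∅} := rfl

lemma Tok_succ' (r : ℕ) (hr : r < n) (z : G) :
    Tok g E iT jT kT σ (r + 1) z =
      (if InG g E iT kT (σ ⟨r, hr⟩) z then
          (Tok g E iT jT kT σ r z).erase (sel (Tok g E iT jT kT σ r z))
        else Tok g E iT jT kT σ r z)
      ∪
      (if InF g E iT jT (σ ⟨r, hr⟩) z then
          {insert ⟨r, hr⟩ (sel (Tok g E iT jT kT σ r (uu g jT kT (σ ⟨r, hr⟩) * z)))}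
        else ∅) := by
  show TokStep g E iT jT kT σ r (Tok g E iT jT kT σ r) z = _
  rw [TokStep, dif_pos hr]

lemma kept_subset (r : ℕ) (hr : r < n) (z : G) :
    (if InG g E iT kT (σ ⟨r, hr⟩) z then
        (Tok g E iT jT kT σ r z).erase (sel (Tok g E iT jT kT σ r z))
      else Tok g E iT jT kT σ r z) ⊆ Tok g E iT jT kT σ r z := by
  by_cases hg : InG g E iT kT (σ ⟨r, hr⟩) z
  · rw [if_pos hg]; exact Finset.erase_subset _ _
  · rw [if_neg hg]

/-- L1: histories after r steps only contain step indices < r. -/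
lemma Tok_hist_lt (r : ℕ) (z : G) {S : Finset (Fin n)}
    (hS : S ∈ Tok g E iT jT kT σ r z) {s : Fin n} (hs : s ∈ S) : (s : ℕ) < r := by
  induction r generalizing z S with
  | zero => rw [Tok_zero] at hS; simp at hS; subst hS; simp at hs
  | succ r ih =>
      by_cases hr : r < n
      · rw [Tok_succ' g E iT jT kT σ r hr] at hS
        rcases Finset.mem_union.mp hS with h | h
        · exact (ih z (kept_subset g E iT jT kT σ r hr z h) hs).trans (Nat.lt_succ_self r)
        · by_cases hf : InF g E iT jT (σ ⟨r, hr⟩) z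
          · rw [if_pos hf, Finset.mem_singleton] at h
            subst h
            rcases Finset.mem_insert.mp hs with h | h
            · subst h; exact Nat.lt_succ_self r
            · by_cases hne : (Tok g E iT jT kT σ r (uu g jT kT (σ ⟨r, hr⟩) * z)).Nonempty
              · exact (ih _ (sel_mem hne) h).trans (Nat.lt_succ_self r)
              · rw [sel, dif_neg hne] at h; simp at h
          · rw [if_neg hf] at h; simp at h
      · have : Tok g E iT jT kT σ (r+1) z = Tok g E iT jT kT σ r z := by
          show TokStep g E iT jT kT σ r (Tok g E iT jT kT σ r) z = _
          rw [TokStep, dif_neg hr]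
        rw [this] at hS
        exact (ih z hS hs).trans (Nat.lt_succ_self r)

/-- arrival tokens are new. -/
lemma arrival_disjoint (r : ℕ) (hr : r < n) (z : G)
    (K : Finset (Finset (Fin n))) (hK : K ⊆ Tok g E iT jT kT σ r z)
    (X : Finset (Fin n)) :
    Disjoint K {insert (⟨r, hr⟩ : Fin n) X} := by
  rw [Finset.disjoint_right]
  intro S hS hSK
  rw [Finset.mem_singleton] at hS
  subst hS
  have := Tok_hist_lt g E iT jT kT σ r z (hK hSK)
    (Finset.mem_insert_self (⟨r, hr⟩ : Fin n) X)
  simp at this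

variable (V W : Matrix (Fin n) {C : Fin (n + 1) → Fin m // IsConfig g E C} ℝ)

/-- L2: the number of tokens at `z` after `r ≤ n` steps is `ν_{r-1}(z)`. -/
lemma card_Tok
    (hE : IsPartition E)
    (hV : ∀ t C, V t C = ind (xj g E C.1 (kT t) ⊆ E (iT t)))
    (hW : ∀ t C, W t C = ind (xj g E C.1 (jT t) ⊆ E (iT t)))
    (hσ : ∀ (i : Fin n) (c : {C : Fin (n + 1) → Fin m // IsConfig g E C}),
      ∃ zz : ℤ,
        (Tmat n * (permMat σ * (W - V)) - shiftRows (permMat σ) * V) i c = (zz : ℝ) ∧ -1 ≤ zz)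
    (r : ℕ) :
    r ≤ n → ∀ z : G, ((Tok g E iT jT kT σ r z).card : ℝ) = nuR g E iT jT kT σ r z := by
  induction r with
  | zero => intro _ z; rw [Tok_zero, nuR_zero]; simp
  | succ r ih =>
      intro hrn z
      have hr : r < n := by omega
      have ih' := ih (by omega)
      have hne : ∀ y : G, InG g E iT kT (σ ⟨r, hr⟩) y →
          (Tok g E iT jT kT σ r y).Nonempty := by
        intro y hy
        have h1 : (1 : ℝ) ≤ nuR g E iT jT kT σ r y :=
          normPoint g E iT jT kT σ hE V W hV hW hσ r hr y hy
        rw [← ih' y] at h1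
        rw [← Finset.card_pos]
        exact_mod_cast lt_of_lt_of_le zero_lt_one h1
      rw [Tok_succ' g E iT jT kT σ r hr z, nuR_succ g E iT jT kT σ r hr z, ← ih' z]
      by_cases hg : InG g E iT kT (σ ⟨r, hr⟩) z
        <;> by_cases hf : InF g E iT jT (σ ⟨r, hr⟩) z
      · -- both
        rw [if_pos hg, if_pos hf, ind_pos hg, ind_pos hf,
          Finset.card_union_of_disjoint (arrival_disjoint g E iT jT kT σ r hr z _
            ((Finset.erase_subset _ _)) _)]
        have := Finset.card_erase_add_one (sel_mem (hne z hg))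
        push_cast [Finset.card_singleton, ← this]
        ring
      · rw [if_pos hg, if_neg hf, ind_pos hg, ind_neg hf, Finset.union_empty]
        have := Finset.card_erase_add_one (sel_mem (hne z hg))
        have h2 : ((Tok g E iT jT kT σ r z).erase
            (sel (Tok g E iT jT kT σ r z))).card + 1
            = (Tok g E iT jT kT σ r z).card := this
        push_cast [← h2]
        ring
      · rw [if_neg hg, if_pos hf, ind_neg hg, ind_pos hf,
          Finset.card_union_of_disjoint (arrival_disjoint g E iT jT kT σ r hr z _
            (le_refl _) _)]
        push_cast [Finset.card_singleton]
        ring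
      · rw [if_neg hg, if_neg hf, ind_neg hg, ind_neg hf, Finset.union_empty]
        ring

end Aux3

end PaperStmt
namespace PaperStmt

section Aux4

attribute [local instance] Classical.propDecidable

variable {G : Type*} [Group G] {n m : ℕ}
variable (g : Fin n → G) (E : Fin m → Set G)
variable (iT : Fin n → Fin m) (jT kT : Fin n → Fin (n + 1))
variable (σ : Equiv.Perm (Fin n))

lemma sort_insert_max {a : Fin n} {S : Finset (Fin n)} (h : ∀ s ∈ S, s < a) :
    (insert a S).sort (· ≤ ·) = S.sort (· ≤ ·) ++ [a] := by
  have ha : a ∉ S := fun hmem => lt_irrefl a (h a hmem)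
  refine (fun hp hs => List.Perm.eq_of_pairwise' (Finset.pairwise_sort _ _) hs hp) ?_ ?_
  · have p1 : ((insert a S).sort (· ≤ ·)).Perm (insert a S).toList :=
      Finset.sort_perm_toList _ _
    have p2 : ((insert a S).toList).Perm (a :: S.toList) := Finset.toList_insert ha
    have p3 : (S.toList).Perm (S.sort (· ≤ ·)) := (Finset.sort_perm_toList _ _).symm
    have p4 : (a :: S.toList).Perm (a :: S.sort (· ≤ ·)) := List.Perm.cons a p3
    have p5 : (a :: S.sort (· ≤ ·)).Perm (S.sort (· ≤ ·) ++ [a]) :=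
      (List.perm_append_singleton a _).symm
    exact ((p1.trans p2).trans p4).trans p5
  · rw [List.pairwise_append]
    refine ⟨Finset.pairwise_sort _ _, List.pairwise_singleton _ a, ?_⟩
    intro x hx y hy
    rw [List.mem_singleton] at hy; subst hy
    exact le_of_lt (h x ((Finset.mem_sort _).mp hx))

/-- ordered product of translations along a history. -/
noncomputable def gam (S : Finset (Fin n)) : G :=
  ((S.sort (· ≤ ·)).map (fun r => uu g jT kT (σ r))).prod

@[simp] lemma gam_empty : gam g jT kT σ (∅ : Finset (Fin n)) = 1 := by
  simp [gam]

lemma gam_insert {a : Fin n} {S : Finset (Fin n)} (h : ∀ s ∈ S, s < a) :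
    gam g jT kT σ (insert a S) = gam g jT kT σ S * uu g jT kT (σ a) := by
  rw [gam, sort_insert_max h, List.map_append, List.prod_append]
  simp [gam]

end Aux4

end PaperStmt
namespace PaperStmt

section Aux5

attribute [local instance] Classical.propDecidable

variable {G : Type*} [Group G] {n m : ℕ}
variable (g : Fin n → G) (E : Fin m → Set G)
variable (iT : Fin n → Fin m) (jT kT : Fin n → Fin (n + 1))
variable (σ : Equiv.Perm (Fin n))
variable (V W : Matrix (Fin n) {C : Fin (n + 1) → Fin m // IsConfig g E C} ℝ)

lemma Tok_nonempty
    (hE : IsPartition E)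
    (hV : ∀ t C, V t C = ind (xj g E C.1 (kT t) ⊆ E (iT t)))
    (hW : ∀ t C, W t C = ind (xj g E C.1 (jT t) ⊆ E (iT t)))
    (hσ : ∀ (i : Fin n) (c : {C : Fin (n + 1) → Fin m // IsConfig g E C}),
      ∃ zz : ℤ,
        (Tmat n * (permMat σ * (W - V)) - shiftRows (permMat σ) * V) i c = (zz : ℝ) ∧ -1 ≤ zz)
    (r : ℕ) (hr : r < n) (y : G)
    (hy : InG g E iT kT (σ ⟨r, hr⟩) y) :
    (Tok g E iT jT kT σ r y).Nonempty := by
  have h1 := normPoint g E iT jT kT σ hE V W hV hW hσ r hr y hy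
  rw [← card_Tok g E iT jT kT σ V W hE hV hW hσ r (le_of_lt hr) y] at h1
  rw [← Finset.card_pos]
  exact_mod_cast lt_of_lt_of_le zero_lt_one h1

/-- L3: at every stage, tokens are in bijection with their birth points. -/
lemma Tok_birth
    (hE : IsPartition E)
    (hV : ∀ t C, V t C = ind (xj g E C.1 (kT t) ⊆ E (iT t)))
    (hW : ∀ t C, W t C = ind (xj g E C.1 (jT t) ⊆ E (iT t)))
    (hσ : ∀ (i : Fin n) (c : {C : Fin (n + 1) → Fin m // IsConfig g E C}),
      ∃ zz : ℤ,
        (Tmat n * (permMat σ * (W - V)) - shiftRows (permMat σ) * V) i c = (zz : ℝ) ∧ -1 ≤ zz)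
    (r : ℕ) : r ≤ n → ∀ z₀ : G,
    ∃! p : G × Finset (Fin n),
      p.2 ∈ Tok g E iT jT kT σ r p.1 ∧ gam g jT kT σ p.2 * p.1 = z₀ := by
  induction r with
  | zero =>
      intro _ z₀
      refine ⟨(z₀, ∅), ⟨by rw [Tok_zero]; simp, by simp⟩, ?_⟩
      rintro ⟨z, S⟩ ⟨hm, hb⟩
      rw [Tok_zero] at hm
      rw [Finset.mem_singleton] at hm
      subst hm
      rw [gam_empty, one_mul] at hb
      subst hb
      rfl
  | succ r ih =>
      intro hrn z₀
      have hr : r < n := by omega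
      obtain ⟨⟨y, S⟩, ⟨hmem, hbirth⟩, huniq⟩ := ih (by omega) z₀
      have hSlt : ∀ s ∈ S, s < (⟨r, hr⟩ : Fin n) := fun s hs =>
        Fin.lt_def.mpr (Tok_hist_lt g E iT jT kT σ r y hmem hs)
      by_cases hmov : InG g E iT kT (σ ⟨r, hr⟩) y ∧ S = sel (Tok g E iT jT kT σ r y)
      · -- CASE: the token at y moves
        obtain ⟨hGy, hSsel⟩ := hmov
        have hInF : InF g E iT jT (σ ⟨r, hr⟩) ((uu g jT kT (σ ⟨r, hr⟩))⁻¹ * y) :=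
          (InF_uuinv g E iT jT kT (σ ⟨r, hr⟩) y).mpr hGy
        refine ⟨((uu g jT kT (σ ⟨r, hr⟩))⁻¹ * y, insert ⟨r, hr⟩ S), ⟨?_, ?_⟩, ?_⟩
        · rw [Tok_succ' g E iT jT kT σ r hr]
          refine Finset.mem_union_right _ ?_
          rw [if_pos hInF, Finset.mem_singleton, mul_inv_cancel_left, ← hSsel]
        · rw [gam_insert g jT kT σ hSlt, mul_assoc, mul_inv_cancel_left, hbirth]
        · rintro ⟨z', S'⟩ ⟨hm', hb'⟩
          rw [Tok_succ' g E iT jT kT σ r hr z'] at hm'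
          rcases Finset.mem_union.mp hm' with hk | ha
          · -- kept: impossible, since (y,S) was selected and removed
            have hk' : S' ∈ Tok g E iT jT kT σ r z' :=
              kept_subset g E iT jT kT σ r hr z' hk
            have heq := huniq (z', S') ⟨hk', hb'⟩
            have hz : z' = y := congrArg Prod.fst heq
            have hs : S' = S := congrArg Prod.snd heq
            subst hz; subst hs
            rw [if_pos hGy] at hk
            exact absurd hSsel (Finset.mem_erase.mp hk).1
          · -- arrival
            by_cases hInF' : InF g E iT jT (σ ⟨r, hr⟩) z'
            · rw [if_pos hInF', Finset.mem_singleton] at ha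
              have hGy' : InG g E iT kT (σ ⟨r, hr⟩) (uu g jT kT (σ ⟨r, hr⟩) * z') :=
                (InG_uu g E iT jT kT (σ ⟨r, hr⟩) z').mpr hInF'
              have hS''mem : sel (Tok g E iT jT kT σ r (uu g jT kT (σ ⟨r, hr⟩) * z'))
                  ∈ Tok g E iT jT kT σ r (uu g jT kT (σ ⟨r, hr⟩) * z') :=
                sel_mem (Tok_nonempty g E iT jT kT σ V W hE hV hW hσ r hr _ hGy')
              have hS''lt : ∀ s ∈ sel (Tok g E iT jT kT σ r (uu g jT kT (σ ⟨r, hr⟩) * z')),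
                  s < (⟨r, hr⟩ : Fin n) := fun s hs =>
                Fin.lt_def.mpr (Tok_hist_lt g E iT jT kT σ r _ hS''mem hs)
              have hb'' : gam g jT kT σ
                    (sel (Tok g E iT jT kT σ r (uu g jT kT (σ ⟨r, hr⟩) * z')))
                  * (uu g jT kT (σ ⟨r, hr⟩) * z') = z₀ := by
                rw [← mul_assoc, ← gam_insert g jT kT σ hS''lt, ← ha]
                exact hb'
              have heq := huniq (uu g jT kT (σ ⟨r, hr⟩) * z',
                sel (Tok g E iT jT kT σ r (uu g jT kT (σ ⟨r, hr⟩) * z'))) ⟨hS''mem, hb''⟩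
              have hz : uu g jT kT (σ ⟨r, hr⟩) * z' = y := congrArg Prod.fst heq
              have hs : sel (Tok g E iT jT kT σ r (uu g jT kT (σ ⟨r, hr⟩) * z')) = S :=
                congrArg Prod.snd heq
              have hz' : z' = (uu g jT kT (σ ⟨r, hr⟩))⁻¹ * y := by
                rw [← hz, inv_mul_cancel_left]
              have ha' : S' = insert (⟨r, hr⟩ : Fin n) S := by rw [← hs]; exact ha
              rw [Prod.mk.injEq]
              exact ⟨hz', ha'⟩
            · rw [if_neg hInF'] at ha; simp at ha
      · -- CASE: the token at y stays
        refine ⟨(y, S), ⟨?_, hbirth⟩, ?_⟩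
        · rw [Tok_succ' g E iT jT kT σ r hr]
          refine Finset.mem_union_left _ ?_
          by_cases hGy : InG g E iT kT (σ ⟨r, hr⟩) y
          · rw [if_pos hGy]
            refine Finset.mem_erase.mpr ⟨?_, hmem⟩
            intro hS
            exact hmov ⟨hGy, hS⟩
          · rw [if_neg hGy]; exact hmem
        · rintro ⟨z', S'⟩ ⟨hm', hb'⟩
          rw [Tok_succ' g E iT jT kT σ r hr z'] at hm'
          rcases Finset.mem_union.mp hm' with hk | ha
          · exact huniq (z', S') ⟨kept_subset g E iT jT kT σ r hr z' hk, hb'⟩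
          · -- arrival: would force the token at y to have moved
            by_cases hInF' : InF g E iT jT (σ ⟨r, hr⟩) z'
            · rw [if_pos hInF', Finset.mem_singleton] at ha
              have hGy' : InG g E iT kT (σ ⟨r, hr⟩) (uu g jT kT (σ ⟨r, hr⟩) * z') :=
                (InG_uu g E iT jT kT (σ ⟨r, hr⟩) z').mpr hInF'
              have hS''mem : sel (Tok g E iT jT kT σ r (uu g jT kT (σ ⟨r, hr⟩) * z'))
                  ∈ Tok g E iT jT kT σ r (uu g jT kT (σ ⟨r, hr⟩) * z') :=
                sel_mem (Tok_nonempty g E iT jT kT σ V W hE hV hW hσ r hr _ hGy')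
              have hS''lt : ∀ s ∈ sel (Tok g E iT jT kT σ r (uu g jT kT (σ ⟨r, hr⟩) * z')),
                  s < (⟨r, hr⟩ : Fin n) := fun s hs =>
                Fin.lt_def.mpr (Tok_hist_lt g E iT jT kT σ r _ hS''mem hs)
              have hb'' : gam g jT kT σ
                    (sel (Tok g E iT jT kT σ r (uu g jT kT (σ ⟨r, hr⟩) * z')))
                  * (uu g jT kT (σ ⟨r, hr⟩) * z') = z₀ := by
                rw [← mul_assoc, ← gam_insert g jT kT σ hS''lt, ← ha]
                exact hb'
              have heq := huniq (uu g jT kT (σ ⟨r, hr⟩) * z',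
                sel (Tok g E iT jT kT σ r (uu g jT kT (σ ⟨r, hr⟩) * z'))) ⟨hS''mem, hb''⟩
              have hz : uu g jT kT (σ ⟨r, hr⟩) * z' = y := congrArg Prod.fst heq
              have hs : sel (Tok g E iT jT kT σ r (uu g jT kT (σ ⟨r, hr⟩) * z')) = S :=
                congrArg Prod.snd heq
              exact absurd ⟨hz ▸ hGy', by rw [← hs, hz]⟩ hmov
            · rw [if_neg hInF'] at ha; simp at ha

end Aux5

end PaperStmt
namespace PaperStmt

section Aux6

variable {n : ℕ}

/-- an arbitrary injective numbering of histories. -/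
noncomputable def ford : Finset (Fin n) → ℕ :=
  fun S => ((Fintype.equivFin (Finset (Fin n))) S : ℕ)

lemma ford_inj : Function.Injective (ford (n := n)) := by
  intro a b h
  exact (Fintype.equivFin (Finset (Fin n))).injective (Fin.val_injective h)

/-- the token with the smallest number. -/
noncomputable def tmin (T : Finset (Finset (Fin n))) : Finset (Fin n) :=
  if h : T.Nonempty then (Finset.exists_min_image T ford h).choose else ∅

/-- the token with the largest number. -/
noncomputable def tmax (T : Finset (Finset (Fin n))) : Finset (Fin n) :=
  if h : T.Nonempty then (Finset.exists_max_image T ford h).choose else ∅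

lemma tmin_mem {T : Finset (Finset (Fin n))} (h : T.Nonempty) : tmin T ∈ T := by
  rw [tmin, dif_pos h]; exact (Finset.exists_min_image T ford h).choose_spec.1

lemma tmin_le {T : Finset (Finset (Fin n))} (h : T.Nonempty) {S : Finset (Fin n)}
    (hS : S ∈ T) : ford (tmin T) ≤ ford S := by
  rw [tmin, dif_pos h]
  exact (Finset.exists_min_image T ford h).choose_spec.2 S hS

lemma tmax_mem {T : Finset (Finset (Fin n))} (h : T.Nonempty) : tmax T ∈ T := by
  rw [tmax, dif_pos h]; exact (Finset.exists_max_image T ford h).choose_spec.1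

lemma tmax_ge {T : Finset (Finset (Fin n))} (h : T.Nonempty) {S : Finset (Fin n)}
    (hS : S ∈ T) : ford S ≤ ford (tmax T) := by
  rw [tmax, dif_pos h]
  exact (Finset.exists_max_image T ford h).choose_spec.2 S hS

lemma tmin_ne_tmax {T : Finset (Finset (Fin n))} (h : T.card = 2) : tmin T ≠ tmax T := by
  obtain ⟨a, b, hab, hT⟩ := Finset.card_eq_two.mp h
  have hne : T.Nonempty := ⟨a, by rw [hT]; simp⟩
  intro heq
  have h1 : a = tmin T := by
    refine ford_inj (le_antisymm ?_ ?_)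
    · have := tmax_ge hne (show a ∈ T by rw [hT]; simp)
      rw [← heq] at this
      exact this
    · exact tmin_le hne (show a ∈ T by rw [hT]; simp)
  have h2 : b = tmin T := by
    refine ford_inj (le_antisymm ?_ ?_)
    · have := tmax_ge hne (show b ∈ T by rw [hT]; simp)
      rw [← heq] at this
      exact this
    · exact tmin_le hne (show b ∈ T by rw [hT]; simp)
  exact hab (h1.trans h2.symm)

lemma mem_eq_tmin_or_tmax {T : Finset (Finset (Fin n))} (h : T.card = 2)
    {S : Finset (Fin n)} (hS : S ∈ T) : S = tmin T ∨ S = tmax T := by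
  obtain ⟨a, b, hab, hT⟩ := Finset.card_eq_two.mp h
  subst hT
  have hne : Finset.Nonempty {a, b} := ⟨a, by simp⟩
  have hm1 := tmin_mem hne
  have hm2 := tmax_mem hne
  rw [Finset.mem_insert, Finset.mem_singleton] at hm1 hm2 hS
  have hnemm := tmin_ne_tmax h
  rcases hm1 with h1 | h1 <;> rcases hm2 with h2 | h2 <;> rcases hS with h3 | h3 <;>
    first
      | (exact absurd (h1.trans h2.symm) hnemm)
      | (left; exact h3.trans h1.symm)
      | (right; exact h3.trans h2.symm)

/-- the globally largest history. -/
noncomputable def TOPS : Finset (Fin n) :=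
  (Finset.exists_max_image Finset.univ (ford (n := n)) ⟨∅, Finset.mem_univ ∅⟩).choose

lemma TOPS_max (S : Finset (Fin n)) : ford S ≤ ford (TOPS (n := n)) :=
  (Finset.exists_max_image Finset.univ (ford (n := n))
    ⟨∅, Finset.mem_univ ∅⟩).choose_spec.2 S (Finset.mem_univ S)

/-- the globally smallest history. -/
noncomputable def BOTS : Finset (Fin n) :=
  (Finset.exists_min_image Finset.univ (ford (n := n)) ⟨∅, Finset.mem_univ ∅⟩).choose

lemma BOTS_min (S : Finset (Fin n)) : ford (BOTS (n := n)) ≤ ford S :=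
  (Finset.exists_min_image Finset.univ (ford (n := n))
    ⟨∅, Finset.mem_univ ∅⟩).choose_spec.2 S (Finset.mem_univ S)

lemma tmin_ne_TOPS {T : Finset (Finset (Fin n))} (h : T.card = 2) : tmin T ≠ TOPS := by
  intro heq
  have hne : T.Nonempty := Finset.card_pos.mp (by omega)
  refine tmin_ne_tmax h (ford_inj (le_antisymm (tmin_le hne (tmax_mem hne)) ?_))
  calc ford (tmax T) ≤ ford (TOPS (n := n)) := TOPS_max _
    _ = ford (tmin T) := by rw [heq]

lemma tmax_ne_BOTS {T : Finset (Finset (Fin n))} (h : T.card = 2) : tmax T ≠ BOTS := by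
  intro heq
  have hne : T.Nonempty := Finset.card_pos.mp (by omega)
  refine tmin_ne_tmax h (ford_inj (le_antisymm (tmin_le hne (tmax_mem hne)) ?_))
  calc ford (tmax T) = ford (BOTS (n := n)) := by rw [heq]
    _ ≤ ford (tmin T) := BOTS_min _

end Aux6

end PaperStmt
namespace PaperStmt

section Aux7

attribute [local instance] Classical.propDecidable

variable {G : Type*} [Group G] {n m : ℕ}
variable (g : Fin n → G) (E : Fin m → Set G)
variable (iT : Fin n → Fin m) (jT kT : Fin n → Fin (n + 1))
variable (σ : Equiv.Perm (Fin n))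
variable (V W : Matrix (Fin n) {C : Fin (n + 1) → Fin m // IsConfig g E C} ℝ)

lemma completeParadox
    (hE : IsPartition E)
    (hV : ∀ t C, V t C = ind (xj g E C.1 (kT t) ⊆ E (iT t)))
    (hW : ∀ t C, W t C = ind (xj g E C.1 (jT t) ⊆ E (iT t)))
    (hσ : ∀ (i : Fin n) (c : {C : Fin (n + 1) → Fin m // IsConfig g E C}),
      ∃ zz : ℤ,
        (Tmat n * (permMat σ * (W - V)) - shiftRows (permMat σ) * V) i c = (zz : ℝ) ∧ -1 ≤ zz)
    (hsum : ∀ C, ∑ i, (W i C - V i C) = 1) :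
    IsCompleteParadox G (2 ^ n - 1) (2 ^ n - 1) := by
  classical
  have hc2 : ∀ z : G, (Tok g E iT jT kT σ n z).card = 2 := by
    intro z
    have h1 := card_Tok g E iT jT kT σ V W hE hV hW hσ n le_rfl z
    rw [nuR_top g E iT jT kT σ hE V W hV hW hsum z] at h1
    exact_mod_cast h1
  have hneT : ∀ z : G, (Tok g E iT jT kT σ n z).Nonempty := fun z =>
    Finset.card_pos.mp (by rw [hc2 z]; omega)
  have hb := Tok_birth g E iT jT kT σ V W hE hV hW hσ n le_rfl
  set FT : G → G × Finset (Fin n) := fun z₀ => (hb z₀).exists.choose with hFTdef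
  have hFT : ∀ z₀ : G, (FT z₀).2 ∈ Tok g E iT jT kT σ n (FT z₀).1 ∧
      gam g jT kT σ (FT z₀).2 * (FT z₀).1 = z₀ := fun z₀ => (hb z₀).exists.choose_spec
  have hFTu : ∀ (z₀ : G) (p : G × Finset (Fin n)),
      p.2 ∈ Tok g E iT jT kT σ n p.1 → gam g jT kT σ p.2 * p.1 = z₀ → FT z₀ = p :=
    fun z₀ p h1 h2 => (hb z₀).unique (hFT z₀) ⟨h1, h2⟩
  have hrev : ∀ (z : G) (S : Finset (Fin n)), S ∈ Tok g E iT jT kT σ n z →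
      FT (gam g jT kT σ S * z) = (z, S) := fun z S hS => hFTu _ (z, S) hS rfl
  set CA : G → Prop := fun z₀ => (FT z₀).2 = tmin (Tok g E iT jT kT σ n (FT z₀).1)
    with hCAdef
  set pieceA : Finset (Fin n) → Set G :=
    fun S => {z₀ : G | (FT z₀).2 = S ∧ CA z₀} with hpAdef
  set pieceB : Finset (Fin n) → Set G :=
    fun S => {z₀ : G | (FT z₀).2 = S ∧ ¬ CA z₀} with hpBdef
  have hBmax : ∀ z₀ : G, ¬ CA z₀ →
      (FT z₀).2 = tmax (Tok g E iT jT kT σ n (FT z₀).1) := fun z₀ h =>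
    (mem_eq_tmin_or_tmax (hc2 _) (hFT z₀).1).resolve_left h
  have cardA : Fintype.card {S : Finset (Fin n) // ¬ (S = TOPS)} = 2 ^ n - 1 := by
    rw [Fintype.card_subtype_compl, Fintype.card_subtype_eq, Fintype.card_finset,
      Fintype.card_fin]
  have cardB : Fintype.card {S : Finset (Fin n) // ¬ (S = BOTS)} = 2 ^ n - 1 := by
    rw [Fintype.card_subtype_compl, Fintype.card_subtype_eq, Fintype.card_finset,
      Fintype.card_fin]
  set eA := Fintype.equivFinOfCardEq cardA with heAdef
  set eB := Fintype.equivFinOfCardEq cardB with heBdef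
  refine ⟨fun i => pieceA ((eA.symm i) : {S : Finset (Fin n) // ¬ (S = TOPS)}).1,
    fun j => pieceB ((eB.symm j) : {S : Finset (Fin n) // ¬ (S = BOTS)}).1,
    fun i => (gam g jT kT σ ((eA.symm i) : {S : Finset (Fin n) // ¬ (S = TOPS)}).1)⁻¹,
    fun j => (gam g jT kT σ ((eB.symm j) : {S : Finset (Fin n) // ¬ (S = BOTS)}).1)⁻¹,
    ?_, ?_, ?_, ?_, ?_, ?_, ?_, ?_⟩
  · -- A pieces pairwise disjoint
    intro i i' hne
    rw [Set.disjoint_left]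
    rintro z₀ ⟨h1, _⟩ ⟨h2, _⟩
    exact hne (eA.symm.injective (Subtype.ext (h1.symm.trans h2)))
  · -- B pieces pairwise disjoint
    intro j j' hne
    rw [Set.disjoint_left]
    rintro z₀ ⟨h1, _⟩ ⟨h2, _⟩
    exact hne (eB.symm.injective (Subtype.ext (h1.symm.trans h2)))
  · -- A and B pieces disjoint
    intro i j
    rw [Set.disjoint_left]
    rintro z₀ ⟨_, hca⟩ ⟨_, hncb⟩
    exact hncb hca
  · -- pieces cover G
    rw [Set.eq_univ_iff_forall]
    intro z₀
    by_cases hca : CA z₀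
    · refine Set.mem_union_left _ (Set.mem_iUnion.mpr ?_)
      have hne : ¬ ((FT z₀).2 = TOPS) := by
        rw [hca]
        exact tmin_ne_TOPS (hc2 (FT z₀).1)
      exact ⟨eA ⟨(FT z₀).2, hne⟩, by simp only [Equiv.symm_apply_apply]; exact ⟨rfl, hca⟩⟩
    · refine Set.mem_union_right _ (Set.mem_iUnion.mpr ?_)
      have hne : ¬ ((FT z₀).2 = BOTS) := by
        rw [hBmax z₀ hca]
        exact tmax_ne_BOTS (hc2 (FT z₀).1)
      exact ⟨eB ⟨(FT z₀).2, hne⟩, by simp only [Equiv.symm_apply_apply]; exact ⟨rfl, hca⟩⟩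
  · -- A translates cover G
    rw [Set.eq_univ_iff_forall]
    intro z
    have hSm := tmin_mem (hneT z)
    have hz₀ := hrev z _ hSm
    have hSne : ¬ (tmin (Tok g E iT jT kT σ n z) = TOPS) := tmin_ne_TOPS (hc2 z)
    refine Set.mem_iUnion.mpr ⟨eA ⟨tmin (Tok g E iT jT kT σ n z), hSne⟩, ?_⟩
    simp only [Equiv.symm_apply_apply]
    refine Set.mem_smul_set.mpr ⟨gam g jT kT σ (tmin (Tok g E iT jT kT σ n z)) * z,
      ⟨?_, ?_⟩, ?_⟩
    · rw [hz₀]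
    · show (FT _).2 = tmin (Tok g E iT jT kT σ n (FT _).1)
      rw [hz₀]
    · rw [smul_eq_mul, inv_mul_cancel_left]
  · -- A translates pairwise disjoint
    intro i i' hne
    rw [Set.disjoint_left]
    intro z h1 h2
    obtain ⟨y, hy, hyz⟩ := Set.mem_smul_set.mp h1
    obtain ⟨y', hy', hyz'⟩ := Set.mem_smul_set.mp h2
    rw [smul_eq_mul] at hyz hyz'
    obtain ⟨hyS, hyCA⟩ := hy
    obtain ⟨hyS', hyCA'⟩ := hy'
    -- recover the final position of both tokens: it is z in both cases
    have hb1 : gam g jT kT σ (FT y).2 * (FT y).1 = y := (hFT y).2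
    have hb1' : gam g jT kT σ (FT y').2 * (FT y').1 = y' := (hFT y').2
    rw [hyS] at hb1
    rw [hyS'] at hb1'
    have hy2 : y = gam g jT kT σ ((eA.symm i) : {S : Finset (Fin n) // ¬ (S = TOPS)}).1 * z := by
      rw [← hyz]; exact (mul_inv_cancel_left _ _).symm
    have hy2' : y' = gam g jT kT σ ((eA.symm i') : {S : Finset (Fin n) // ¬ (S = TOPS)}).1 * z := by
      rw [← hyz']; exact (mul_inv_cancel_left _ _).symm
    have hz1 : (FT y).1 = z := mul_left_cancel (hb1.trans hy2)
    have hz1' : (FT y').1 = z := mul_left_cancel (hb1'.trans hy2')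
    -- both indices are the tmin of the same token set
    have e1 : ((eA.symm i) : {S : Finset (Fin n) // ¬ (S = TOPS)}).1
        = tmin (Tok g E iT jT kT σ n z) := by
      rw [← hyS, hyCA, hz1]
    have e1' : ((eA.symm i') : {S : Finset (Fin n) // ¬ (S = TOPS)}).1
        = tmin (Tok g E iT jT kT σ n z) := by
      rw [← hyS', hyCA', hz1']
    exact hne (eA.symm.injective (Subtype.ext (e1.trans e1'.symm)))
  · -- B translates cover G
    rw [Set.eq_univ_iff_forall]
    intro z
    have hSm := tmax_mem (hneT z)
    have hz₀ := hrev z _ hSm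
    have hSne : ¬ (tmax (Tok g E iT jT kT σ n z) = BOTS) := tmax_ne_BOTS (hc2 z)
    refine Set.mem_iUnion.mpr ⟨eB ⟨tmax (Tok g E iT jT kT σ n z), hSne⟩, ?_⟩
    simp only [Equiv.symm_apply_apply]
    refine Set.mem_smul_set.mpr ⟨gam g jT kT σ (tmax (Tok g E iT jT kT σ n z)) * z,
      ⟨?_, ?_⟩, ?_⟩
    · rw [hz₀]
    · show ¬ ((FT _).2 = tmin (Tok g E iT jT kT σ n (FT _).1))
      rw [hz₀]
      exact (tmin_ne_tmax (hc2 z)).symm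
    · rw [smul_eq_mul, inv_mul_cancel_left]
  · -- B translates pairwise disjoint
    intro j j' hne
    rw [Set.disjoint_left]
    intro z h1 h2
    obtain ⟨y, hy, hyz⟩ := Set.mem_smul_set.mp h1
    obtain ⟨y', hy', hyz'⟩ := Set.mem_smul_set.mp h2
    rw [smul_eq_mul] at hyz hyz'
    obtain ⟨hyS, hyCA⟩ := hy
    obtain ⟨hyS', hyCA'⟩ := hy'
    have hb1 : gam g jT kT σ (FT y).2 * (FT y).1 = y := (hFT y).2
    have hb1' : gam g jT kT σ (FT y').2 * (FT y').1 = y' := (hFT y').2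
    rw [hyS] at hb1
    rw [hyS'] at hb1'
    have hy2 : y = gam g jT kT σ ((eB.symm j) : {S : Finset (Fin n) // ¬ (S = BOTS)}).1 * z := by
      rw [← hyz]; exact (mul_inv_cancel_left _ _).symm
    have hy2' : y' = gam g jT kT σ ((eB.symm j') : {S : Finset (Fin n) // ¬ (S = BOTS)}).1 * z := by
      rw [← hyz']; exact (mul_inv_cancel_left _ _).symm
    have hz1 : (FT y).1 = z := mul_left_cancel (hb1.trans hy2)
    have hz1' : (FT y').1 = z := mul_left_cancel (hb1'.trans hy2')
    have e1 : ((eB.symm j) : {S : Finset (Fin n) // ¬ (S = BOTS)}).1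
        = tmax (Tok g E iT jT kT σ n z) := by
      have := hBmax y hyCA
      rw [← hyS, this, hz1]
    have e1' : ((eB.symm j') : {S : Finset (Fin n) // ¬ (S = BOTS)}).1
        = tmax (Tok g E iT jT kT σ n z) := by
      have := hBmax y' hyCA'
      rw [← hyS', this, hz1']
    exact hne (eB.symm.injective (Subtype.ext (e1.trans e1'.symm)))

end Aux7

end PaperStmt
namespace PaperStmt

section Aux8

attribute [local instance] Classical.propDecidable

variable {G : Type*} [Group G] {n m : ℕ}
variable (g : Fin n → G) (E : Fin m → Set G)
variable (iT : Fin n → Fin m) (jT kT : Fin n → Fin (n + 1))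
variable (V W : Matrix (Fin n) {C : Fin (n + 1) → Fin m // IsConfig g E C} ℝ)

lemma InF_iff_cfg (hE : IsPartition E) (t : Fin n) (z : G) :
    InF g E iT jT t z ↔ cfg g E hE z (jT t) = iT t :=
  (cfg_eq_iff g E hE z (jT t) (iT t)).symm

lemma InG_iff_cfg (hE : IsPartition E) (t : Fin n) (z : G) :
    InG g E iT kT t z ↔ cfg g E hE z (kT t) = iT t :=
  (cfg_eq_iff g E hE z (kT t) (iT t)).symm

lemma card_ne_one (hE : IsPartition E)
    (hV : ∀ t C, V t C = ind (xj g E C.1 (kT t) ⊆ E (iT t)))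
    (hW : ∀ t C, W t C = ind (xj g E C.1 (jT t) ⊆ E (iT t)))
    (hsum : ∀ C, ∑ i, (W i C - V i C) = 1) :
    Nat.card {C : Fin (n + 1) → Fin m // IsConfig g E C} ≠ 1 := by
  intro h1
  have hsub := (Nat.card_eq_one_iff_unique.mp h1).1
  have hcfg' : ∀ z z' : G, cfg g E hE z = cfg g E hE z' := fun z z' =>
    congrArg Subtype.val (@Subsingleton.elim _ hsub (cfgS g E hE z) (cfgS g E hE z'))
  have hF : ∀ (t : Fin n) (z z' : G), InF g E iT jT t z ↔ InF g E iT jT t z' := by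
    intro t z z'
    rw [InF_iff_cfg g E iT jT hE t z, InF_iff_cfg g E iT jT hE t z', hcfg' z z']
  have hG : ∀ (t : Fin n) (z : G), InG g E iT kT t z ↔ InF g E iT jT t z := fun t z =>
    (InF_uuinv g E iT jT kT t z).symm.trans (hF t _ z)
  have hP := hsumPoint g E iT jT kT V W hE hV hW hsum 1
  have : (0 : ℝ) = 1 := by
    rw [← hP]
    refine (Finset.sum_eq_zero fun t _ => ?_).symm
    rw [ind_congr (hG t 1)]
    ring
  norm_num at this

lemma card_ne_two (hE : IsPartition E)
    (hV : ∀ t C, V t C = ind (xj g E C.1 (kT t) ⊆ E (iT t)))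
    (hW : ∀ t C, W t C = ind (xj g E C.1 (jT t) ⊆ E (iT t)))
    (hsum : ∀ C, ∑ i, (W i C - V i C) = 1) :
    Nat.card {C : Fin (n + 1) → Fin m // IsConfig g E C} ≠ 2 := by
  intro h2
  obtain ⟨C₁, C₂, hne, huniv⟩ := Nat.card_eq_two_iff.mp h2
  have hall : ∀ C : {C : Fin (n + 1) → Fin m // IsConfig g E C}, C = C₁ ∨ C = C₂ := by
    intro C
    have : C ∈ ({C₁, C₂} : Set {C : Fin (n + 1) → Fin m // IsConfig g E C}) :=
      huniv ▸ Set.mem_univ C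
    simpa using this
  obtain ⟨z₁, hz₁⟩ := cfg_of_config g E hE C₁.2
  obtain ⟨z₂, hz₂⟩ := cfg_of_config g E hE C₂.2
  have hzS₁ : cfgS g E hE z₁ = C₁ := Subtype.ext hz₁
  have hzS₂ : cfgS g E hE z₂ = C₂ := Subtype.ext hz₂
  have hGq : ∀ (t : Fin n) (z : G),
      InG g E iT kT t z ↔ (cfgS g E hE z).1 (kT t) = iT t := fun t z =>
    InG_iff_cfg g E iT kT hE t z
  have key : ∀ t : Fin n,
      ind (InF g E iT jT t z₁) + ind (InF g E iT jT t z₂)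
        = ind (InG g E iT kT t z₁) + ind (InG g E iT kT t z₂) := by
    intro t
    have hg1iff : InG g E iT kT t z₁ ↔ C₁.1 (kT t) = iT t := by
      rw [hGq t z₁, hzS₁]
    have hg2iff : InG g E iT kT t z₂ ↔ C₂.1 (kT t) = iT t := by
      rw [hGq t z₂, hzS₂]
    by_cases hf1 : InF g E iT jT t z₁ <;> by_cases hf2 : InF g E iT jT t z₂
    · -- both in F: then F (hence F') holds everywhere
      have hFall : ∀ z : G, InF g E iT jT t z := by
        intro z
        rcases hall (cfgS g E hE z) with h | h
        · rw [InF_iff_cfg g E iT jT hE t z, show cfg g E hE z = C₁.1 from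
            congrArg Subtype.val h]
          rw [InF_iff_cfg g E iT jT hE t z₁, hz₁] at hf1
          exact hf1
        · rw [InF_iff_cfg g E iT jT hE t z, show cfg g E hE z = C₂.1 from
            congrArg Subtype.val h]
          rw [InF_iff_cfg g E iT jT hE t z₂, hz₂] at hf2
          exact hf2
      have hg1 : InG g E iT kT t z₁ := (InF_uuinv g E iT jT kT t z₁).mp (hFall _)
      have hg2 : InG g E iT kT t z₂ := (InF_uuinv g E iT jT kT t z₂).mp (hFall _)
      rw [ind_pos hf1, ind_pos hf2, ind_pos hg1, ind_pos hg2]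
    · -- z₁ in F, z₂ not
      have hq1 : (cfgS g E hE (uu g jT kT t * z₁)).1 (kT t) = iT t := by
        rw [← hGq]; exact (InG_uu g E iT jT kT t z₁).mpr hf1
      have hq2 : ¬ (cfgS g E hE (uu g jT kT t * z₂)).1 (kT t) = iT t := by
        intro h
        exact hf2 ((InG_uu g E iT jT kT t z₂).mp ((hGq _ _).mpr h))
      have hnecfg : cfgS g E hE (uu g jT kT t * z₁) ≠ cfgS g E hE (uu g jT kT t * z₂) :=
        fun h => hq2 (h ▸ hq1)
      have hxor : (C₁.1 (kT t) = iT t ∧ ¬ C₂.1 (kT t) = iT t)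
          ∨ (C₂.1 (kT t) = iT t ∧ ¬ C₁.1 (kT t) = iT t) := by
        rcases hall (cfgS g E hE (uu g jT kT t * z₁)) with ha | ha <;>
          rcases hall (cfgS g E hE (uu g jT kT t * z₂)) with hb | hb
        · exact absurd (ha.trans hb.symm) hnecfg
        · left; exact ⟨ha ▸ hq1, hb ▸ hq2⟩
        · right; exact ⟨ha ▸ hq1, hb ▸ hq2⟩
        · exact absurd (ha.trans hb.symm) hnecfg
      rcases hxor with ⟨hq, hnq⟩ | ⟨hq, hnq⟩
      · rw [ind_pos hf1, ind_neg hf2, ind_pos (hg1iff.mpr hq),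
          ind_neg (fun h => hnq (hg2iff.mp h))]
      · rw [ind_pos hf1, ind_neg hf2, ind_neg (fun h => hnq (hg1iff.mp h)),
          ind_pos (hg2iff.mpr hq)]
        norm_num
    · -- z₂ in F, z₁ not
      have hq1 : (cfgS g E hE (uu g jT kT t * z₂)).1 (kT t) = iT t := by
        rw [← hGq]; exact (InG_uu g E iT jT kT t z₂).mpr hf2
      have hq2 : ¬ (cfgS g E hE (uu g jT kT t * z₁)).1 (kT t) = iT t := by
        intro h
        exact hf1 ((InG_uu g E iT jT kT t z₁).mp ((hGq _ _).mpr h))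
      have hnecfg : cfgS g E hE (uu g jT kT t * z₂) ≠ cfgS g E hE (uu g jT kT t * z₁) :=
        fun h => hq2 (h ▸ hq1)
      have hxor : (C₁.1 (kT t) = iT t ∧ ¬ C₂.1 (kT t) = iT t)
          ∨ (C₂.1 (kT t) = iT t ∧ ¬ C₁.1 (kT t) = iT t) := by
        rcases hall (cfgS g E hE (uu g jT kT t * z₂)) with ha | ha <;>
          rcases hall (cfgS g E hE (uu g jT kT t * z₁)) with hb | hb
        · exact absurd (ha.trans hb.symm) hnecfg
        · left; exact ⟨ha ▸ hq1, hb ▸ hq2⟩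
        · right; exact ⟨ha ▸ hq1, hb ▸ hq2⟩
        · exact absurd (ha.trans hb.symm) hnecfg
      rcases hxor with ⟨hq, hnq⟩ | ⟨hq, hnq⟩
      · rw [ind_neg hf1, ind_pos hf2, ind_pos (hg1iff.mpr hq),
          ind_neg (fun h => hnq (hg2iff.mp h))]
        norm_num
      · rw [ind_neg hf1, ind_pos hf2, ind_neg (fun h => hnq (hg1iff.mp h)),
          ind_pos (hg2iff.mpr hq)]
    · -- neither in F
      have hFall : ∀ z : G, ¬ InF g E iT jT t z := by
        intro z hz
        rcases hall (cfgS g E hE z) with h | h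
        · refine hf1 ?_
          rw [InF_iff_cfg g E iT jT hE t z, show cfg g E hE z = C₁.1 from
            congrArg Subtype.val h] at hz
          rw [InF_iff_cfg g E iT jT hE t z₁, hz₁]
          exact hz
        · refine hf2 ?_
          rw [InF_iff_cfg g E iT jT hE t z, show cfg g E hE z = C₂.1 from
            congrArg Subtype.val h] at hz
          rw [InF_iff_cfg g E iT jT hE t z₂, hz₂]
          exact hz
      have hg1 : ¬ InG g E iT kT t z₁ := fun h =>
        hFall _ ((InF_uuinv g E iT jT kT t z₁).mpr h)
      have hg2 : ¬ InG g E iT kT t z₂ := fun h =>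
        hFall _ ((InF_uuinv g E iT jT kT t z₂).mpr h)
      rw [ind_neg hf1, ind_neg hf2, ind_neg hg1, ind_neg hg2]
  have e1 := hsumPoint g E iT jT kT V W hE hV hW hsum z₁
  have e2 := hsumPoint g E iT jT kT V W hE hV hW hsum z₂
  have hzero : ∑ t : Fin n,
      ((ind (InF g E iT jT t z₁) - ind (InG g E iT kT t z₁))
        + (ind (InF g E iT jT t z₂) - ind (InG g E iT kT t z₂))) = 0 :=
    Finset.sum_eq_zero fun t _ => by have := key t; linarith
  rw [Finset.sum_add_distrib, e1, e2] at hzero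
  norm_num at hzero

end Aux8

end PaperStmt
namespace PaperStmt

/-- If a subsystem of `Eq(g, E)` consisting of `n` equations, encoded by `n × ℓ`
(0,1)-matrices `V`, `W` (where `ℓ = |Con(g, E)|`), is normal and moreover
`∑_i (W_i - V_i) = (1, 1, …, 1)`, then `τ(G) ≤ (ℓ - 1)(2 ^ n - 1)`. -/
theorem tarski_bound_of_normal {G : Type*} [Group G] {n m : ℕ}
    (g : Fin n → G) (E : Fin m → Set G) (hE : IsPartition E)
    (iT : Fin n → Fin m) (jT kT : Fin n → Fin (n + 1))
    (V W : Matrix (Fin n) {C : Fin (n + 1) → Fin m // IsConfig g E C} ℝ)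
    (hV : ∀ t C, V t C = ind (xj g E C.1 (kT t) ⊆ E (iT t)))
    (hW : ∀ t C, W t C = ind (xj g E C.1 (jT t) ⊆ E (iT t)))
    (hnorm : IsNormal V W)
    (hsum : ∀ C, ∑ i, (W i C - V i C) = 1) :
    tarskiNumber G ≤
      (((Nat.card {C : Fin (n + 1) → Fin m // IsConfig g E C} - 1) * (2 ^ n - 1) : ℕ) : ℕ∞) := by
  classical
  obtain ⟨σ, hσ⟩ := hnorm
  rcases Nat.eq_zero_or_pos n with hn0 | hn
  · -- n = 0 is impossible: the empty sum cannot be 1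
    exfalso
    subst hn0
    have hP := hsumPoint g E iT jT kT V W hE hV hW hsum 1
    simp at hP
  · -- the number of configurations is at least 3
    have hnonempty : Nonempty {C : Fin (n + 1) → Fin m // IsConfig g E C} :=
      ⟨cfgS g E hE 1⟩
    have hpos : 0 < Nat.card {C : Fin (n + 1) → Fin m // IsConfig g E C} := Nat.card_pos
    have h1 := card_ne_one g E iT jT kT V W hE hV hW hsum
    have h2 := card_ne_two g E iT jT kT V W hE hV hW hsum
    have hcard3 : 3 ≤ Nat.card {C : Fin (n + 1) → Fin m // IsConfig g E C} := by omega
    -- the explicit complete paradoxical decomposition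
    have hpara := completeParadox g E iT jT kT σ V W hE hV hW hσ hsum
    have hmem : ((((2 ^ n - 1) + (2 ^ n - 1) : ℕ)) : ℕ∞) ∈
        {N : ℕ∞ | ∃ p q : ℕ, N = ((p + q : ℕ) : ℕ∞) ∧ IsCompleteParadox G p q} :=
      ⟨2 ^ n - 1, 2 ^ n - 1, rfl, hpara⟩
    refine le_trans (sInf_le hmem) ?_
    rw [Nat.cast_le]
    have hp1 : 0 < 2 ^ n := pow_pos two_pos n
    calc (2 ^ n - 1) + (2 ^ n - 1) = 2 * (2 ^ n - 1) := (two_mul _).symm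
      _ ≤ (Nat.card {C : Fin (n + 1) → Fin m // IsConfig g E C} - 1) * (2 ^ n - 1) :=
        Nat.mul_le_mul_right _ (by omega)

end PaperStmt
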